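/- Let f : 2^N → ℝ≥0 be non-negative and let A, Z ⊆ N. Fix t ∈ [0,1] and t_s ∈ [0,1], and suppose x ∈ [0,1]^N satisfies x_u ≤ 1 − e^{-t} for all u ∉ Z and x_u ≤ 1 − e^{-max(0, t − t_s)} for all u ∈ Z. Define the Lovász-type integral I = ∫_0^1 f(T_λ(x ∨ 1_A)) dλ where T_λ(y) = {u : y_u ≥ λ}. If f is submodular, then I ≥ (e^{-max(0,t−t_s)} − e^{-t}) · max{0, f(A) − f(A ∪ Z)} + e^{-t} · f(A). -/

import Mathlib

open MeasureTheory Set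

def Submodular {α : Type*} [DecidableEq α] (f : Finset α → ℝ) : Prop :=
  ∀ A B : Finset α, f (A ∪ B) + f (A ∩ B) ≤ f A + f B

theorem stmt_11 {N : Type*} [Fintype N] [DecidableEq N]
    (f : Finset N → ℝ) (hnn : ∀ S : Finset N, 0 ≤ f S) (hsub : Submodular f)
    (A Z : Finset N) (t ts : ℝ) (ht : t ∈ Set.Icc (0:ℝ) 1) (hts : ts ∈ Set.Icc (0:ℝ) 1)
    (x : N → ℝ) (hx : ∀ u, x u ∈ Set.Icc (0:ℝ) 1)
    (h1 : ∀ u ∉ Z, x u ≤ 1 - Real.exp (-t))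
    (h2 : ∀ u ∈ Z, x u ≤ 1 - Real.exp (-(max 0 (t - ts)))) :
    (∫ lam in (0:ℝ)..1,
        f (Finset.filter (fun u => lam ≤ max (x u) (if u ∈ A then 1 else 0)) Finset.univ)) ≥
      (Real.exp (-(max 0 (t - ts))) - Real.exp (-t)) * max 0 (f A - f (A ∪ Z)) +
        Real.exp (-t) * f A := by
  obtain ⟨ht0, ht1⟩ := ht
  obtain ⟨hts0, hts1⟩ := hts
  set a : ℝ := 1 - Real.exp (-(max 0 (t - ts))) with ha
  set b : ℝ := 1 - Real.exp (-t) with hb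
  set M : ℝ := max 0 (f A - f (A ∪ Z)) with hM
  set m : N → ℝ := fun u => max (x u) (if u ∈ A then 1 else 0) with hm
  set F : ℝ → Finset N := fun lam => Finset.filter (fun u => lam ≤ m u) Finset.univ with hF
  set g : ℝ → ℝ := fun lam => f (F lam) with hg
  set h : ℝ → ℝ := fun lam => if b < lam then f A else if a < lam then M else 0 with hh
  have hMnn : 0 ≤ M := le_max_left _ _
  have ha0 : 0 ≤ a := by
    have : Real.exp (-(max 0 (t - ts))) ≤ 1 :=
      Real.exp_le_one_iff.mpr (neg_nonpos.mpr (le_max_left 0 _))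
    linarith
  have hab : a ≤ b := by
    have : Real.exp (-t) ≤ Real.exp (-(max 0 (t - ts))) :=
      Real.exp_le_exp.mpr (by simp only [neg_le_neg_iff]; exact max_le ht0 (by linarith))
    simp only [ha, hb]; linarith
  have hb1 : b ≤ 1 := by
    have := Real.exp_pos (-t); simp only [hb]; linarith
  -- measurability of level sets of F
  have hFmeas : ∀ S : Finset N, MeasurableSet {lam : ℝ | F lam = S} := by
    intro S
    have hset : {lam : ℝ | F lam = S} = ⋂ u : N, {lam : ℝ | lam ≤ m u ↔ u ∈ S} := by
      ext lam
      rw [Set.mem_setOf_eq, Set.mem_iInter, Finset.ext_iff]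
      apply forall_congr'
      intro u
      rw [Set.mem_setOf_eq]
      simp only [hF, Finset.mem_filter, Finset.mem_univ, true_and]
    rw [hset]
    refine MeasurableSet.iInter fun u => ?_
    by_cases hu : u ∈ S
    · have : {lam : ℝ | lam ≤ m u ↔ u ∈ S} = Iic (m u) := by ext lam; simp [hu]
      rw [this]; exact measurableSet_Iic
    · have : {lam : ℝ | lam ≤ m u ↔ u ∈ S} = Ioi (m u) := by
        ext lam
        simp only [Set.mem_setOf_eq, hu, iff_false, not_le, Set.mem_Ioi]
      rw [this]; exact measurableSet_Ioi
  have hgmeas : Measurable g := by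
    have hrw : g = fun lam => ∑ S : Finset N, if F lam = S then f S else 0 := by
      funext lam
      rw [Finset.sum_ite_eq (Finset.univ : Finset (Finset N)) (F lam) f]
      simp [hg]
    rw [hrw]
    exact Finset.measurable_sum _ fun S _ =>
      Measurable.ite (hFmeas S) measurable_const measurable_const
  have hhmeas : Measurable h := by
    apply Measurable.ite (measurableSet_Ioi (a := b)) measurable_const
    exact Measurable.ite (measurableSet_Ioi (a := a)) measurable_const measurable_const
  -- interval integrability from boundedness
  have hInt : ∀ φ : ℝ → ℝ, Measurable φ → (∃ C, ∀ lam, |φ lam| ≤ C) →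
      IntervalIntegrable φ volume 0 1 := by
    rintro φ hφ ⟨C, hC⟩
    rw [intervalIntegrable_iff_integrableOn_Ioc_of_le zero_le_one]
    refine ⟨hφ.aestronglyMeasurable.restrict, ?_⟩
    exact HasFiniteIntegral.of_bounded (C := C) (ae_of_all _ fun lam => by
      simpa using hC lam)
  have hgint : IntervalIntegrable g volume 0 1 := by
    refine hInt g hgmeas ⟨∑ S : Finset N, |f S|, fun lam => ?_⟩
    exact Finset.single_le_sum (f := fun S => |f S|) (fun S _ => abs_nonneg _)
      (Finset.mem_univ (F lam))
  have hhint : IntervalIntegrable h volume 0 1 := by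
    refine hInt h hhmeas ⟨|f A| + |M|, fun lam => ?_⟩
    simp only [hh]
    split_ifs
    · have := abs_nonneg M; linarith [le_abs_self (f A)]
    · have := abs_nonneg (f A); linarith [le_abs_self M]
    · rw [abs_zero]; positivity
  -- pointwise bound h ≤ g on [0,1]
  have hle : ∀ lam ∈ Icc (0:ℝ) 1, h lam ≤ g lam := by
    intro lam ⟨hl0, hl1⟩
    simp only [hh, hg]
    split_ifs with hbl hal
    · -- b < lam : F lam = A
      have hFA : F lam = A := by
        ext u
        simp only [hF, Finset.mem_filter, Finset.mem_univ, true_and, hm]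
        constructor
        · intro hle
          by_contra hu
          simp only [hu, if_false] at hle
          have hxu : max (x u) 0 = x u := max_eq_left (hx u).1
          rw [hxu] at hle
          by_cases huz : u ∈ Z
          · have := h2 u huz; have := hab; simp only [hb] at hbl; linarith
          · have := h1 u huz; simp only [hb] at hbl ⊢; linarith
        · intro hu
          simp only [hu, if_true]
          exact le_trans hl1 (le_max_right _ _)
      rw [hFA]
    · -- a < lam ≤ b : M ≤ f (F lam)
      have hAF : A ⊆ F lam := by
        intro u hu
        simp only [hF, Finset.mem_filter, Finset.mem_univ, true_and, hm, hu, if_true]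
        exact le_trans hl1 (le_max_right _ _)
      have hZF : ∀ u ∈ Z, u ∈ F lam → u ∈ A := by
        intro u huz huF
        by_contra hu
        simp only [hF, Finset.mem_filter, Finset.mem_univ, true_and, hm, hu, if_false] at huF
        have hxu : max (x u) 0 = x u := max_eq_left (hx u).1
        rw [hxu] at huF
        have := h2 u huz
        simp only [ha] at hal
        linarith
      have hcap : F lam ∩ (A ∪ Z) = A := by
        ext u
        simp only [Finset.mem_inter, Finset.mem_union]
        constructor
        · rintro ⟨huF, hu | hu⟩
          · exact hu
          · exact hZF u hu huF
        · intro hu; exact ⟨hAF hu, Or.inl hu⟩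
      have key := hsub (F lam) (A ∪ Z)
      rw [hcap] at key
      have h0 := hnn (F lam ∪ (A ∪ Z))
      refine max_le (hnn _) (by linarith)
    · exact hnn _
  -- main inequality
  have hmono : ∫ lam in (0:ℝ)..1, h lam ≤ ∫ lam in (0:ℝ)..1, g lam :=
    intervalIntegral.integral_mono_on zero_le_one hhint hgint hle
  -- compute integral of h
  have hsub01 : ∀ c d : ℝ, 0 ≤ c → c ≤ d → d ≤ 1 → IntervalIntegrable h volume c d := by
    intro c d hc hcd hd1
    refine hhint.mono_set ?_
    rw [uIcc_of_le hcd, uIcc_of_le zero_le_one]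
    exact Icc_subset_Icc hc hd1
  have h1eq : ∫ lam in (0:ℝ)..a, h lam = 0 := by
    rw [intervalIntegral.integral_of_le ha0]
    rw [setIntegral_congr_fun measurableSet_Ioc (g := fun _ => (0:ℝ))
      (fun lam hlam => by
        simp only [hh]
        rw [if_neg (by simp; linarith [hlam.2]), if_neg (by simp; linarith [hlam.2])])]
    simp
  have h2eq : ∫ lam in a..b, h lam = M * (b - a) := by
    rw [intervalIntegral.integral_of_le hab]
    rw [setIntegral_congr_fun measurableSet_Ioc (g := fun _ => M)
      (fun lam hlam => by
        simp only [hh]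
        rw [if_neg (by simp; linarith [hlam.2]), if_pos hlam.1])]
    rw [setIntegral_const, Real.volume_real_Ioc_of_le (by linarith)]
    rw [smul_eq_mul, mul_comm]
  have h3eq : ∫ lam in b..(1:ℝ), h lam = f A * (1 - b) := by
    rw [intervalIntegral.integral_of_le hb1]
    rw [setIntegral_congr_fun measurableSet_Ioc (g := fun _ => f A)
      (fun lam hlam => by simp only [hh]; rw [if_pos hlam.1])]
    rw [setIntegral_const, Real.volume_real_Ioc_of_le (by linarith)]
    rw [smul_eq_mul, mul_comm]
  have hsplit : ∫ lam in (0:ℝ)..1, h lam =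
      (∫ lam in (0:ℝ)..a, h lam) + (∫ lam in a..b, h lam) + (∫ lam in b..(1:ℝ), h lam) := by
    rw [intervalIntegral.integral_add_adjacent_intervals
        (hsub01 0 a le_rfl ha0 (le_trans hab hb1))
        (hsub01 a b ha0 hab hb1),
      intervalIntegral.integral_add_adjacent_intervals
        (hsub01 0 b le_rfl (le_trans ha0 hab) hb1)
        (hsub01 b 1 (le_trans ha0 hab) hb1 le_rfl)]
  have hval : ∫ lam in (0:ℝ)..1, h lam =
      (Real.exp (-(max 0 (t - ts))) - Real.exp (-t)) * M + Real.exp (-t) * f A := by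
    rw [hsplit, h1eq, h2eq, h3eq]
    simp only [ha, hb]
    ring
  calc (Real.exp (-(max 0 (t - ts))) - Real.exp (-t)) * M + Real.exp (-t) * f A
      = ∫ lam in (0:ℝ)..1, h lam := hval.symm
    _ ≤ ∫ lam in (0:ℝ)..1, g lam := hmono
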